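/- Let E be a Banach space, p a continuous projection with range X and kernel Y, t ∈ GL(E), and q = t·p·t⁻¹. Then q lies in the path component of p in the space of idempotents of L(E) if and only if [t] lies in the image of the map π₀(GL(X) × GL(Y)) → π₀(GL(E)) induced by (x,y) ↦ x ⊕ y. -/

import Mathlib

open ContinuousLinearMap

lemma conj_step {R : Type*} [Ring R] {e f : R} (he : e * e = e) (hf : f * f = f) :
    (1 + (f - e) * (e + e - 1)) * e = f * (1 + (f - e) * (e + e - 1)) := by
  have he' : ∀ z : R, e * (e * z) = e * z := fun z => by rw [← mul_assoc, he]
  have hf' : ∀ z : R, f * (f * z) = f * z := fun z => by rw [← mul_assoc, hf]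
  have h1 : (1 + (f - e) * (e + e - 1)) * e = f * e := by
    simp only [add_mul, sub_mul, mul_add, mul_sub, mul_one, one_mul, mul_assoc, he, hf, he', hf']
    abel
  have h2 : f * (1 + (f - e) * (e + e - 1)) = f * e := by
    simp only [add_mul, sub_mul, mul_add, mul_sub, mul_one, one_mul, mul_assoc, he, hf, he', hf']
    abel
  rw [h1, h2]

lemma block_decomp {X Y : Type*} [NormedAddCommGroup X] [NormedSpace ℝ X]
    [NormedAddCommGroup Y] [NormedSpace ℝ Y]
    (w : (X × Y) →L[ℝ] (X × Y))
    (h : w * ((ContinuousLinearMap.id ℝ X).prodMap 0)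
        = ((ContinuousLinearMap.id ℝ X).prodMap 0) * w) :
    w = ((fst ℝ X Y) ∘L w ∘L (inl ℝ X Y)).prodMap ((snd ℝ X Y) ∘L w ∘L (inr ℝ X Y)) := by
  have key : ∀ v : X × Y, w (v.1, 0) = ((w v).1, 0) := by
    intro v
    have := DFunLike.congr_fun h v
    simpa [mul_apply, Prod.map, Prod.ext_iff] using this
  refine ContinuousLinearMap.ext fun v => ?_
  have h1 : (w v).1 = (w (v.1, 0)).1 := by rw [key v]
  have h0 : (w (v.1, 0)).2 = 0 := by
    have := key (v.1, (0:Y))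
    simpa [Prod.ext_iff] using this
  have hsum : w v = w (v.1, 0) + w (0, v.2) := by
    rw [← map_add]; congr 1; simp
  refine Prod.ext ?_ ?_
  · simpa [Prod.map] using h1
  · simp only [coe_prodMap', Prod.map, comp_apply, coe_comp', Function.comp_apply,
      inl_apply, inr_apply]
    rw [hsum]; simp [h0]

lemma joined_one_oneAdd {R : Type*} [NormedRing R] [NormedAlgebra ℝ R] [CompleteSpace R]
    {a : R} (ha : ‖a‖ < 1) : ∃ v : Rˣ, (v : R) = 1 + a ∧ Joined (1 : Rˣ) v := by
  have hn : ∀ σ : unitInterval, ‖-(σ.1 • a)‖ < 1 := by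
    intro σ
    rw [norm_neg, norm_smul, Real.norm_eq_abs, abs_of_nonneg σ.2.1]
    calc σ.1 * ‖a‖ ≤ 1 * ‖a‖ := by
          apply mul_le_mul_of_nonneg_right σ.2.2 (norm_nonneg a)
      _ < 1 := by simpa using ha
  let u : unitInterval → Rˣ := fun σ => Units.oneSub (-(σ.1 • a)) (hn σ)
  have hval : ∀ σ, (u σ : R) = 1 + σ.1 • a := by
    intro σ; simp [u, Units.oneSub, sub_neg_eq_add]
  have hcont : Continuous u := by
    rw [Units.isOpenEmbedding_val.toIsEmbedding.continuous_iff]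
    simp only [Function.comp_def, hval]
    fun_prop
  refine ⟨u 1, by simp [hval], ⟨⟨⟨u, hcont⟩, ?_, rfl⟩⟩⟩
  · apply Units.ext; simp [hval]

lemma joined_mul {M : Type*} [TopologicalSpace M] [Monoid M] [ContinuousMul M]
    {a b c d : M} (h1 : Joined a b) (h2 : Joined c d) : Joined (a * c) (b * d) := by
  obtain ⟨p1⟩ := h1; obtain ⟨p2⟩ := h2
  exact ⟨⟨⟨fun σ => p1 σ * p2 σ, p1.continuous.mul p2.continuous⟩, by simp, by simp⟩⟩

theorem stmt5 {X Y : Type*} [NormedAddCommGroup X] [NormedSpace ℝ X] [CompleteSpace X]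
    [NormedAddCommGroup Y] [NormedSpace ℝ Y] [CompleteSpace Y]
    (p : (X × Y) →L[ℝ] (X × Y))
    (hp : p = (ContinuousLinearMap.id ℝ X).prodMap (0 : Y →L[ℝ] Y))
    (t : ((X × Y) →L[ℝ] (X × Y))ˣ) :
    JoinedIn {r : (X × Y) →L[ℝ] (X × Y) | r * r = r} p
        ((t : (X × Y) →L[ℝ] (X × Y)) * p * (↑t⁻¹ : (X × Y) →L[ℝ] (X × Y))) ↔
      ∃ (x : (X →L[ℝ] X)ˣ) (y : (Y →L[ℝ] Y)ˣ) (s : ((X × Y) →L[ℝ] (X × Y))ˣ),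
        (s : (X × Y) →L[ℝ] (X × Y)) = (x : X →L[ℝ] X).prodMap (y : Y →L[ℝ] Y) ∧
        Joined t s := by
  have hpp : p * p = p := by
    refine ContinuousLinearMap.ext fun v => ?_
    simp [hp, mul_apply, Prod.map]
  have hpp' : ∀ z : (X × Y) →L[ℝ] (X × Y), p * (p * z) = p * z := fun z => by rw [← mul_assoc, hpp]
  constructor
  · -- forward direction
    rintro ⟨γ, hγmem⟩
    have hγm : ∀ σ, γ σ * γ σ = γ σ := fun σ => hγmem σ
    -- bound M
    obtain ⟨σ₀, -, hM⟩ := isCompact_univ.exists_isMaxOn (Set.univ_nonempty)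
      (Continuous.continuousOn (by fun_prop :
        Continuous fun σ : unitInterval => ‖γ σ + γ σ - 1‖))
    set M := ‖γ σ₀ + γ σ₀ - 1‖ with hMdef
    have hM0 : 0 ≤ M := norm_nonneg _
    set ε := 1 / (M + 1) with hεdef
    have hε : 0 < ε := by positivity
    have hM1 : M + 1 ≠ 0 := by positivity
    have hεM : ε * (M + 1) = 1 := by
      rw [hεdef]; field_simp
    obtain ⟨δ, hδ, hucd⟩ := Metric.uniformContinuous_iff.1
      (CompactSpace.uniformContinuous_of_continuous γ.continuous) ε hε
    obtain ⟨n, hn⟩ := exists_nat_one_div_lt hδ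
    set N : ℕ := n + 1 with hNdef
    have hNpos : (0:ℝ) < N := by positivity
    have hNδ : 1 / (N:ℝ) < δ := by push_cast; exact_mod_cast hn
    set σ : ℕ → unitInterval := fun i => Set.projIcc (0:ℝ) 1 zero_le_one (i / N) with hσdef
    have hmem : ∀ i : ℕ, i ≤ N → ((i:ℝ)/N) ∈ Set.Icc (0:ℝ) 1 :=
      fun i hi => ⟨by positivity, by rw [div_le_one hNpos]; exact_mod_cast hi⟩
    have hσ : ∀ i, i ≤ N → (σ i : ℝ) = i / N := by
      intro i hi
      have h : σ i = ⟨(i:ℝ)/N, hmem i hi⟩ := Set.projIcc_of_mem zero_le_one (hmem i hi)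
      rw [h]
    have hσ0 : σ 0 = 0 := by
      apply Subtype.ext
      rw [hσ 0 (Nat.zero_le _)]; simp
    have hσN : σ N = 1 := by
      apply Subtype.ext
      rw [hσ N le_rfl]; field_simp; rfl
    have key : ∀ i, i ≤ N → ∃ u : ((X × Y) →L[ℝ] (X × Y))ˣ, Joined 1 u ∧ (u : (X × Y) →L[ℝ] (X × Y)) * p * (↑u⁻¹ : (X × Y) →L[ℝ] (X × Y)) = γ (σ i) := by
      intro i
      induction i with
      | zero =>
        intro _
        refine ⟨1, Joined.refl 1, ?_⟩
        simp [hσ0, γ.source]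
      | succ i ih =>
        intro hi
        obtain ⟨u, hu1, hu2⟩ := ih (Nat.le_of_succ_le hi)
        set e := γ (σ i) with hedef
        set f := γ (σ (i+1)) with hfdef
        have he : e * e = e := hγm _
        have hf : f * f = f := hγm _
        have hfe : ‖f - e‖ < ε := by
          rw [← dist_eq_norm]
          apply hucd
          rw [Subtype.dist_eq, hσ _ hi, hσ _ (Nat.le_of_succ_le hi), Real.dist_eq,
            div_sub_div_same]
          have h2 : ((i+1:ℕ):ℝ) - (i:ℕ) = 1 := by push_cast; ring
          rw [h2, abs_of_pos (by positivity)]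
          exact hNδ
        have hb : ‖e + e - 1‖ ≤ M := hM (Set.mem_univ (σ i))
        have ha : ‖(f - e) * (e + e - 1)‖ < 1 := by
          calc ‖(f - e) * (e + e - 1)‖ ≤ ‖f - e‖ * ‖e + e - 1‖ := norm_mul_le _ _
            _ ≤ ‖f - e‖ * (M + 1) :=
              mul_le_mul_of_nonneg_left (by linarith) (norm_nonneg _)
            _ < ε * (M + 1) := by
              apply mul_lt_mul_of_pos_right hfe (by linarith)
            _ = 1 := hεM
        obtain ⟨v, hv, hv1⟩ := joined_one_oneAdd ha
        have hconj : (v : (X × Y) →L[ℝ] (X × Y)) * e = f * (v : (X × Y) →L[ℝ] (X × Y)) := by rw [hv]; exact conj_step he hf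
        have hvu : Joined (1 : ((X × Y) →L[ℝ] (X × Y))ˣ) (v * u) := by
          have := joined_mul hv1 hu1
          rwa [one_mul] at this
        refine ⟨v * u, hvu, ?_⟩
        calc (↑(v*u) : (X × Y) →L[ℝ] (X × Y)) * p * ↑(v*u)⁻¹
            = ↑v * ((↑u * p * ↑u⁻¹) * ↑v⁻¹) := by
              simp [Units.val_mul, mul_assoc]
          _ = ↑v * (e * ↑v⁻¹) := by rw [hu2]
          _ = (f * ↑v) * ↑v⁻¹ := by rw [← mul_assoc, hconj]
          _ = f := by rw [mul_assoc, Units.mul_inv, mul_one]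
    obtain ⟨u, hu1, hu2⟩ := key N le_rfl
    rw [hσN, γ.target] at hu2
    -- w := u⁻¹ * t commutes with p
    have hwcomm : (↑(u⁻¹ * t) : (X × Y) →L[ℝ] (X × Y)) * p = p * ↑(u⁻¹ * t) := by
      have h1 : (↑t : (X × Y) →L[ℝ] (X × Y)) * p = ↑u * p * ↑u⁻¹ * ↑t := by
        rw [hu2, mul_assoc (↑t * p), Units.inv_mul, mul_one]
      calc (↑(u⁻¹ * t) : (X × Y) →L[ℝ] (X × Y)) * p = ↑u⁻¹ * ((↑t : (X × Y) →L[ℝ] (X × Y)) * p) := by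
            simp [Units.val_mul, mul_assoc]
        _ = ↑u⁻¹ * (↑u * p * ↑u⁻¹ * ↑t) := by rw [h1]
        _ = p * ↑(u⁻¹ * t) := by
            simp [Units.val_mul, mul_assoc, Units.inv_mul_cancel_left]
    have hinv : ∀ w : ((X × Y) →L[ℝ] (X × Y))ˣ, (↑w : (X × Y) →L[ℝ] (X × Y)) * p = p * ↑w → (↑w⁻¹ : (X × Y) →L[ℝ] (X × Y)) * p = p * ↑w⁻¹ := by
      intro w hw
      have := congrArg (fun z => (↑w⁻¹ : (X × Y) →L[ℝ] (X × Y)) * z * ↑w⁻¹) hw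
      simpa [mul_assoc, Units.inv_mul_cancel_left, Units.mul_inv, Units.mul_inv_cancel_left]
        using this.symm
    have hwcomm' := hinv _ hwcomm
    set w : ((X × Y) →L[ℝ] (X × Y))ˣ := u⁻¹ * t with hwdef
    have hd1 : (w : (X × Y) →L[ℝ] (X × Y))
        = ((fst ℝ X Y) ∘L (w : (X × Y) →L[ℝ] (X × Y)) ∘L (inl ℝ X Y)).prodMap ((snd ℝ X Y) ∘L (w : (X × Y) →L[ℝ] (X × Y)) ∘L (inr ℝ X Y)) :=
      block_decomp _ (by rw [← hp]; exact hwcomm)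
    have hd2 : (↑w⁻¹ : (X × Y) →L[ℝ] (X × Y))
        = ((fst ℝ X Y) ∘L (↑w⁻¹ : (X × Y) →L[ℝ] (X × Y)) ∘L (inl ℝ X Y)).prodMap
            ((snd ℝ X Y) ∘L (↑w⁻¹ : (X × Y) →L[ℝ] (X × Y)) ∘L (inr ℝ X Y)) :=
      block_decomp _ (by rw [← hp]; exact hwcomm')
    set x0 := (fst ℝ X Y) ∘L (w : (X × Y) →L[ℝ] (X × Y)) ∘L (inl ℝ X Y) with hx0
    set y0 := (snd ℝ X Y) ∘L (w : (X × Y) →L[ℝ] (X × Y)) ∘L (inr ℝ X Y) with hy0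
    set x1 := (fst ℝ X Y) ∘L (↑w⁻¹ : (X × Y) →L[ℝ] (X × Y)) ∘L (inl ℝ X Y) with hx1
    set y1 := (snd ℝ X Y) ∘L (↑w⁻¹ : (X × Y) →L[ℝ] (X × Y)) ∘L (inr ℝ X Y) with hy1
    have hxy : (x0.prodMap y0) * (x1.prodMap y1) = 1 := by
      rw [← hd1, ← hd2]; exact w.mul_inv
    have hyx : (x1.prodMap y1) * (x0.prodMap y0) = 1 := by
      rw [← hd1, ← hd2]; exact w.inv_mul
    have hx01 : x0 * x1 = 1 := by
      refine ContinuousLinearMap.ext fun a => ?_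
      have h := DFunLike.congr_fun hxy (a, (0:Y))
      simp only [mul_apply, coe_prodMap', Prod.map, one_apply, Prod.ext_iff] at h ⊢
      exact h.1
    have hx10 : x1 * x0 = 1 := by
      refine ContinuousLinearMap.ext fun a => ?_
      have h := DFunLike.congr_fun hyx (a, (0:Y))
      simp only [mul_apply, coe_prodMap', Prod.map, one_apply, Prod.ext_iff] at h ⊢
      exact h.1
    have hy01 : y0 * y1 = 1 := by
      refine ContinuousLinearMap.ext fun b => ?_
      have h := DFunLike.congr_fun hxy ((0:X), b)
      simp only [mul_apply, coe_prodMap', Prod.map, one_apply, Prod.ext_iff] at h ⊢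
      exact h.2
    have hy10 : y1 * y0 = 1 := by
      refine ContinuousLinearMap.ext fun b => ?_
      have h := DFunLike.congr_fun hyx ((0:X), b)
      simp only [mul_apply, coe_prodMap', Prod.map, one_apply, Prod.ext_iff] at h ⊢
      exact h.2
    refine ⟨⟨x0, x1, hx01, hx10⟩, ⟨y0, y1, hy01, hy10⟩, w, hd1, ?_⟩
    have hmap : Joined ((1:((X × Y) →L[ℝ] (X × Y))ˣ)⁻¹ * t) (u⁻¹ * t) := by
      obtain ⟨P⟩ := hu1
      exact ⟨P.map ((continuous_inv.mul continuous_const :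
        Continuous fun v : ((X × Y) →L[ℝ] (X × Y))ˣ => v⁻¹ * t))⟩
    simpa using hmap
  · -- reverse direction
    rintro ⟨x, y, s, hs, hts⟩
    have hcomm : (s : (X × Y) →L[ℝ] (X × Y)) * p = p * (s : (X × Y) →L[ℝ] (X × Y)) := by
      refine ContinuousLinearMap.ext fun v => ?_
      simp [hp, hs, mul_apply, Prod.map]
    have hsp : (s : (X × Y) →L[ℝ] (X × Y)) * p * (↑s⁻¹ : (X × Y) →L[ℝ] (X × Y)) = p := by
      rw [hcomm, mul_assoc, Units.mul_inv, mul_one]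
    have hF : Continuous fun u : ((X × Y) →L[ℝ] (X × Y))ˣ => (u : (X × Y) →L[ℝ] (X × Y)) * p * (↑u⁻¹ : (X × Y) →L[ℝ] (X × Y)) :=
      (Units.continuous_val.mul continuous_const).mul Units.continuous_coe_inv
    obtain ⟨P⟩ := hts.symm
    refine ⟨(P.map hF).cast hsp.symm rfl, fun τ => ?_⟩
    have : ∀ u : ((X × Y) →L[ℝ] (X × Y))ˣ, ((u : (X × Y) →L[ℝ] (X × Y)) * p * ↑u⁻¹) * ((u : (X × Y) →L[ℝ] (X × Y)) * p * ↑u⁻¹) = (u : (X × Y) →L[ℝ] (X × Y)) * p * ↑u⁻¹ := by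
      intro u
      simp [mul_assoc, Units.inv_mul_cancel_left, hpp']
    simpa [Path.cast, Set.mem_setOf_eq] using this (P τ)
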